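/- Let n ≥ 1 and q ∈ ℂ with 0 < |q| < 1. For F = (F_0,…,F_{n−1}) ∈ H_n define u(z) = (1/n) Σ_{i=0}^{n−1} F_i(q^i z) and P F = (u(z), u(q⁻¹z),…,u(q^{−(n−1)}z)). Then P F ∈ U_n, P F = F whenever F ∈ U_n, and ⟨F − P F, Ū⟩ = 0 for every Ū ∈ U_n; i.e. P is the orthogonal projection of H_n onto U_n. (Lemma 2.15.) -/

import Mathlib

noncomputable section

/-- Dilation operator: `(dil q k a)(z) = a(q^k z)`.
A formal Laurent series `a(z) = ∑_{m ≤ N} a_m z^m ∈ ℂ((z⁻¹))` is encoded as the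
Hahn series `F : LaurentSeries ℂ` with `F.coeff j = a_{-j}` (support bounded below,
i.e. finitely many positive powers of `z`); dilation sends `a_m ↦ q^{k m} a_m`,
i.e. `coeff j ↦ q^{-(k j)} * coeff j`. -/
def dil (q : ℂ) (k : ℤ) (F : LaurentSeries ℂ) : LaurentSeries ℂ where
  coeff := fun j => q ^ (-(k * j)) * F.coeff j
  isPWO_support' := by
    apply F.isPWO_support'.mono
    intro j hj
    simp only [Function.mem_support] at hj ⊢
    intro h
    exact hj (by rw [h, mul_zero])

/-- `Res a = a₀`, the coefficient of `z⁰`. -/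
def Res (F : LaurentSeries ℂ) : ℂ := F.coeff 0

/-- The bilinear pairing `⟨F, G⟩ = ∑_j Res (F_j G_j)` on `H_n = (ℂ((z⁻¹)))^n`. -/
def pair {n : ℕ} (F G : Fin n → LaurentSeries ℂ) : ℂ := ∑ j, Res (F j * G j)

/-- The operator `ĥτ̂_n` on `H_n`: `(ĥτ̂_n F)_j (z) = F_{j+1 mod n} (q z)`. -/
def htau (q : ℂ) {n : ℕ} [NeZero n] (F : Fin n → LaurentSeries ℂ) :
    Fin n → LaurentSeries ℂ := fun j => dil q 1 (F (j + 1))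

/-- `F ∈ U_n`, i.e. `F = (u(z), u(q⁻¹ z), …, u(q^{-(n-1)} z))` for some `u ∈ ℂ((z⁻¹))`. -/
def InU (q : ℂ) {n : ℕ} (F : Fin n → LaurentSeries ℂ) : Prop :=
  ∃ u : LaurentSeries ℂ, ∀ j : Fin n, F j = dil q (-((j : ℕ) : ℤ)) u

end

noncomputable section AuxLemmas

@[simp] lemma dil_coeff (q : ℂ) (k : ℤ) (F : LaurentSeries ℂ) (j : ℤ) :
    (dil q k F).coeff j = q ^ (-(k * j)) * F.coeff j := rfl

lemma dil_support_subset (q : ℂ) (k : ℤ) (F : LaurentSeries ℂ) :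
    (dil q k F).support ⊆ F.support := by
  intro j hj
  simp only [HahnSeries.mem_support, dil_coeff] at hj ⊢
  intro h
  exact hj (by rw [h, mul_zero])

lemma dil_dil (q : ℂ) (hq : q ≠ 0) (k l : ℤ) (u : LaurentSeries ℂ) :
    dil q k (dil q l u) = dil q (k + l) u := by
  ext j
  simp only [dil_coeff, ← mul_assoc]
  rw [← zpow_add₀ hq]
  ring_nf

lemma dil_zero (q : ℂ) (u : LaurentSeries ℂ) : dil q 0 u = u := by
  ext j; simp

lemma dil_add (q : ℂ) (k : ℤ) (a b : LaurentSeries ℂ) :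
    dil q k (a + b) = dil q k a + dil q k b := by
  ext j; simp [mul_add]

lemma dil_zero' (q : ℂ) (k : ℤ) : dil q k (0 : LaurentSeries ℂ) = 0 := by
  ext j; simp

lemma dil_sub (q : ℂ) (k : ℤ) (a b : LaurentSeries ℂ) :
    dil q k (a - b) = dil q k a - dil q k b := by
  ext j; simp [HahnSeries.coeff_sub, mul_sub]

lemma dil_smul (q : ℂ) (k : ℤ) (c : ℂ) (a : LaurentSeries ℂ) :
    dil q k (c • a) = c • dil q k a := by
  ext j
  simp only [dil_coeff, HahnSeries.coeff_smul, smul_eq_mul]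
  ring

lemma dil_sum (q : ℂ) (k : ℤ) {ι : Type*} (s : Finset ι) (f : ι → LaurentSeries ℂ) :
    dil q k (∑ i ∈ s, f i) = ∑ i ∈ s, dil q k (f i) := by
  classical
  induction s using Finset.induction_on with
  | empty => simp [dil_zero']
  | @insert _ _ h ih => simp [Finset.sum_insert h, dil_add, ih]

lemma hahn_smul_mul (c : ℂ) (a b : LaurentSeries ℂ) : (c • a) * b = c • (a * b) := by
  have hsub : (c • a).support ⊆ a.support := by
    intro j hj
    simp only [HahnSeries.mem_support, HahnSeries.coeff_smul, smul_eq_mul] at hj ⊢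
    intro h
    exact hj (by rw [h, mul_zero])
  ext m
  rw [HahnSeries.coeff_smul, HahnSeries.coeff_mul_left' a.isPWO_support hsub,
    HahnSeries.coeff_mul, Finset.smul_sum]
  refine Finset.sum_congr rfl fun ij _ => ?_
  simp only [HahnSeries.coeff_smul, smul_eq_mul, mul_assoc]

lemma dil_mul (q : ℂ) (hq : q ≠ 0) (k : ℤ) (a b : LaurentSeries ℂ) :
    dil q k (a * b) = dil q k a * dil q k b := by
  ext m
  have hR : (dil q k a * dil q k b).coeff m =
      ∑ ij ∈ Finset.antidiagonal a.isPWO_support b.isPWO_support m,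
        (dil q k a).coeff ij.1 * (dil q k b).coeff ij.2 := by
    rw [HahnSeries.coeff_mul]
    refine Finset.sum_subset ?_ ?_
    · intro ij hij
      rw [Finset.mem_addAntidiagonal] at hij ⊢
      exact ⟨dil_support_subset q k a hij.1, dil_support_subset q k b hij.2.1, hij.2.2⟩
    · intro ij hij hij'
      rw [Finset.mem_addAntidiagonal] at hij hij'
      push_neg at hij'
      by_cases h1 : ij.1 ∈ (dil q k a).support
      · have h2 : (dil q k b).coeff ij.2 = 0 := by
          by_contra h
          exact (hij' h1 h) hij.2.2
        rw [h2, mul_zero]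
      · rw [HahnSeries.mem_support, not_not] at h1
        rw [h1, zero_mul]
  rw [hR, dil_coeff, HahnSeries.coeff_mul, Finset.mul_sum]
  refine Finset.sum_congr rfl fun ij hij => ?_
  rw [Finset.mem_addAntidiagonal] at hij
  simp only [dil_coeff]
  have h1 : q ^ (-(k * ij.1)) * q ^ (-(k * ij.2)) = q ^ (-(k * m)) := by
    rw [← zpow_add₀ hq, ← hij.2.2]
    ring_nf
  calc q ^ (-(k * m)) * (a.coeff ij.1 * b.coeff ij.2)
      = (q ^ (-(k * ij.1)) * q ^ (-(k * ij.2))) * (a.coeff ij.1 * b.coeff ij.2) := by rw [h1]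
    _ = q ^ (-(k * ij.1)) * a.coeff ij.1 * (q ^ (-(k * ij.2)) * b.coeff ij.2) := by ring

lemma Res_dil (q : ℂ) (k : ℤ) (a : LaurentSeries ℂ) : Res (dil q k a) = Res a := by
  simp [Res]

lemma Res_dil_mul (q : ℂ) (hq : q ≠ 0) (k : ℤ) (a b : LaurentSeries ℂ) :
    Res (dil q k a * dil q k b) = Res (a * b) := by
  rw [← dil_mul q hq, Res_dil]

lemma Res_sub (a b : LaurentSeries ℂ) : Res (a - b) = Res a - Res b := by
  simp [Res, HahnSeries.coeff_sub]

lemma Res_smul (c : ℂ) (a : LaurentSeries ℂ) : Res (c • a) = c * Res a := by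
  simp [Res]

lemma Res_sum {ι : Type*} (s : Finset ι) (f : ι → LaurentSeries ℂ) :
    Res (∑ i ∈ s, f i) = ∑ i ∈ s, Res (f i) := by
  classical
  induction s using Finset.induction_on with
  | empty => simp [Res]
  | @insert _ _ h ih =>
      rw [Finset.sum_insert h, Finset.sum_insert h, ← ih]
      simp [Res, HahnSeries.coeff_add]

end AuxLemmas

/-- Lemma 2.15: the map `F ↦ P F`, where `(P F)_j (z) = u(q^{-j} z)` with
`u(z) = (1/n) ∑_{i=0}^{n-1} F_i(q^i z)`, is the orthogonal projection of
`H_n` onto `U_n`: `P F ∈ U_n`, `P F = F` for `F ∈ U_n`, and `F − P F ⟂ U_n`. -/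
theorem orthogonal_projection_onto_Un (n : ℕ) [NeZero n] (q : ℂ)
    (hq0 : 0 < ‖q‖) (hq1 : ‖q‖ < 1)
    (F : Fin n → LaurentSeries ℂ)
    (u : LaurentSeries ℂ)
    (hu : u = (n : ℂ)⁻¹ • ∑ i : Fin n, dil q ((i : ℕ) : ℤ) (F i))
    (P : Fin n → LaurentSeries ℂ)
    (hP : ∀ j : Fin n, P j = dil q (-((j : ℕ) : ℤ)) u) :
    InU q P ∧ (InU q F → P = F) ∧
      ∀ Ubar : Fin n → LaurentSeries ℂ, InU q Ubar →
        pair (fun j => F j - P j) Ubar = 0 := by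
  have hq : q ≠ 0 := by
    intro h
    rw [h] at hq0
    simp at hq0
  have hn : (n : ℂ) ≠ 0 := Nat.cast_ne_zero.mpr (NeZero.ne n)
  have hsum : ∑ i : Fin n, dil q ((i : ℕ) : ℤ) (F i) = (n : ℂ) • u := by
    rw [hu, smul_smul, mul_inv_cancel₀ hn, one_smul]
  refine ⟨⟨u, hP⟩, ?_, ?_⟩
  · rintro ⟨v, hv⟩
    have huv : u = v := by
      rw [hu]
      have : ∀ i : Fin n, dil q ((i : ℕ) : ℤ) (F i) = v := by
        intro i
        rw [hv i, dil_dil q hq, add_neg_cancel, dil_zero]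
      rw [Finset.sum_congr rfl fun i _ => this i, Finset.sum_const, Finset.card_univ,
        Fintype.card_fin, ← Nat.cast_smul_eq_nsmul ℂ, smul_smul, inv_mul_cancel₀ hn, one_smul]
    funext j
    rw [hP j, huv, ← hv j]
  · rintro Ubar ⟨v, hv⟩
    have key : ∀ j : Fin n, Res ((F j - P j) * Ubar j)
        = Res (dil q ((j : ℕ) : ℤ) (F j) * v) - Res (u * v) := by
      intro j
      have hFj : F j - P j = dil q (-((j : ℕ) : ℤ)) (dil q ((j : ℕ) : ℤ) (F j - P j)) := by
        rw [dil_dil q hq, neg_add_cancel, dil_zero]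
      rw [hv j, hFj, Res_dil_mul q hq, dil_sub, sub_mul, Res_sub, hP j,
        dil_dil q hq, add_neg_cancel, dil_zero]
    unfold pair
    rw [Finset.sum_congr rfl fun j _ => key j, Finset.sum_sub_distrib]
    rw [← Res_sum, ← Finset.sum_mul, hsum, hahn_smul_mul, Res_smul]
    simp [mul_comm]
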